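/- Let X and Z be nonempty finite types and let F be a nonempty finite set of functions from X to Z that is two-universal, i.e. for all distinct x, x' in X, |Z| · |{f ∈ F : f(x) = f(x')}| ≤ |F|. Let B be a nonempty finite type, let (ρ^x)_{x∈X} be PSD matrices indexed by B, set ρ_B := ∑_{x∈X} ρ^x, and let σ be a positive definite matrix indexed by B. For f ∈ F and z ∈ Z set ρ^{f,z} := ∑_{x : f(x)=z} ρ^x. Then (1/|F|) · ∑_{f∈F} [ ∑_{z∈Z} tr((σ^{−1/4} ρ^{f,z} σ^{−1/4})²) − (1/|Z|) · tr((σ^{−1/4} ρ_B σ^{−1/4})²) ] ≤ ∑_{x∈X} tr((σ^{−1/4} ρ^x σ^{−1/4})²). (The bracketed quantity is the conditional L2-distance from uniform d₂(ρ_{f(X)B}|σ) of the hashed state, and the right-hand side equals tr(ρ_{XB}) · 2^{−H₂(ρ_{XB}|σ)} in terms of the collision entropy H₂.) -/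

import Mathlib

open Matrix Kronecker Finset
open scoped Classical ComplexOrder

lemma psd_trace_re_nonneg {B : Type*} [Fintype B] {A : Matrix B B ℂ}
    (hA : A.PosSemidef) : 0 ≤ A.trace.re := by
  have h : ∀ i, 0 ≤ A i i := fun i => by
    exact hA.diag_nonneg
  have h' : ∀ i, 0 ≤ (A i i).re := fun i => (Complex.le_def.mp (h i)).1
  simp only [Matrix.trace, Matrix.diag, Complex.re_sum]
  exact Finset.sum_nonneg fun i _ => h' i

open scoped MatrixOrder in
lemma trace_mul_psd_re_nonneg {B : Type*} [Fintype B] [DecidableEq B]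
    {A C : Matrix B B ℂ} (hA : A.PosSemidef) (hC : C.PosSemidef) :
    0 ≤ ((A * C).trace).re := by
  have h1 : (A * C).trace = (CFC.sqrt A * C * CFC.sqrt A).trace := by
    conv_lhs => rw [← CFC.sqrt_mul_sqrt_self A hA.nonneg]
    rw [Matrix.mul_assoc, Matrix.trace_mul_comm, Matrix.mul_assoc]
  have h2 : (CFC.sqrt A * C * CFC.sqrt A).PosSemidef := by
    have := hC.mul_mul_conjTranspose_same (CFC.sqrt A)
    rwa [(CFC.sqrt_nonneg A).posSemidef.1.eq] at this
  rw [h1]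
  exact psd_trace_re_nonneg h2

/-- The expected conditional L2-distance from uniform of a key obtained by
two-universal hashing is bounded by `tr(ρ_XB) · 2^{-H₂(ρ_XB|σ)}`, i.e.
`∑ₓ tr((σ^{-1/4} ρ^x σ^{-1/4})²)`. -/
theorem l2_distance_two_universal_hashing
    {X Z B : Type*} [Fintype X] [Fintype Z] [Fintype B]
    [DecidableEq X] [DecidableEq Z] [DecidableEq B]
    [Nonempty X] [Nonempty Z] [Nonempty B]
    (F : Finset (X → Z)) (hF : F.Nonempty)
    (htu : ∀ x x' : X, x ≠ x' →
      Fintype.card Z * (F.filter fun f => f x = f x').card ≤ F.card)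
    (ρ : X → Matrix B B ℂ) (hρ : ∀ x, (ρ x).PosSemidef)
    (σ : Matrix B B ℂ) (hσ : σ.PosDef)
    (σ4 : Matrix B B ℂ) (hσ4 : σ4.PosSemidef) (hσ4root : σ4 ^ 4 = σ) :
    (F.card : ℝ)⁻¹ *
        ∑ f ∈ F,
          ((∑ z : Z,
              (((σ4⁻¹ * (∑ x ∈ univ.filter (fun x => f x = z), ρ x) * σ4⁻¹) ^ 2).trace).re)
            - (Fintype.card Z : ℝ)⁻¹ *
                (((σ4⁻¹ * (∑ x : X, ρ x) * σ4⁻¹) ^ 2).trace).re)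
      ≤ ∑ x : X, (((σ4⁻¹ * ρ x * σ4⁻¹) ^ 2).trace).re := by
  set M : X → Matrix B B ℂ := fun x => σ4⁻¹ * ρ x * σ4⁻¹ with hM
  have hinvH : σ4⁻¹ᴴ = σ4⁻¹ := by
    rw [Matrix.conjTranspose_nonsing_inv, hσ4.1.eq]
  have hMpsd : ∀ x, (M x).PosSemidef := by
    intro x
    have := (hρ x).mul_mul_conjTranspose_same σ4⁻¹
    rwa [hinvH] at this
  set t : X → X → ℝ := fun x y => (((M x) * (M y)).trace).re with ht
  have htnn : ∀ x y, 0 ≤ t x y := fun x y =>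
    trace_mul_psd_re_nonneg (hMpsd x) (hMpsd y)
  -- key expansion for any finset
  have key : ∀ (S : Finset X),
      (((σ4⁻¹ * (∑ x ∈ S, ρ x) * σ4⁻¹) ^ 2).trace).re = ∑ x ∈ S, ∑ y ∈ S, t x y := by
    intro S
    have h1 : σ4⁻¹ * (∑ x ∈ S, ρ x) * σ4⁻¹ = ∑ x ∈ S, M x := by
      rw [Finset.mul_sum, Finset.sum_mul]
    rw [h1, sq, Finset.sum_mul_sum]
    simp [Matrix.trace_sum, Complex.re_sum]
    rfl
  -- fiberwise identity
  have hfib : ∀ f : X → Z,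
      (∑ z : Z, ∑ x ∈ univ.filter (fun x => f x = z),
          ∑ y ∈ univ.filter (fun y => f y = z), t x y)
        = ∑ x : X, ∑ y ∈ univ.filter (fun y => f y = f x), t x y := by
    intro f
    rw [← Finset.sum_fiberwise univ f
        (fun x => ∑ y ∈ univ.filter (fun y => f y = f x), t x y)]
    refine Finset.sum_congr rfl fun z _ => Finset.sum_congr rfl fun x hx => ?_
    rw [Finset.mem_filter] at hx
    rw [hx.2]
  have e1 : ∀ f : X → Z,
      (∑ z : Z,
          (((σ4⁻¹ * (∑ x ∈ univ.filter (fun x => f x = z), ρ x) * σ4⁻¹) ^ 2).trace).re)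
        = ∑ x : X, ∑ y ∈ univ.filter (fun y => f y = f x), t x y := by
    intro f
    rw [← hfib f]
    exact Finset.sum_congr rfl fun z _ => key _
  have e2 : (((σ4⁻¹ * (∑ x : X, ρ x) * σ4⁻¹) ^ 2).trace).re = ∑ x : X, ∑ y : X, t x y :=
    key univ
  -- count
  set N : X → X → ℕ := fun x y => (F.filter fun f => f y = f x).card with hN
  have e3 : ∑ f ∈ F, ∑ x : X, ∑ y ∈ univ.filter (fun y => f y = f x), t x y
      = ∑ x : X, ∑ y : X, (N x y : ℝ) * t x y := by
    rw [Finset.sum_comm]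
    refine Finset.sum_congr rfl fun x _ => ?_
    have : ∀ f ∈ F, (∑ y ∈ univ.filter (fun y => f y = f x), t x y)
        = ∑ y : X, if f y = f x then t x y else 0 := fun f _ => by
      rw [Finset.sum_filter]
    rw [Finset.sum_congr rfl this, Finset.sum_comm]
    refine Finset.sum_congr rfl fun y _ => ?_
    rw [← Finset.sum_filter, Finset.sum_const, nsmul_eq_mul]
  have hZpos : (0:ℝ) < (Fintype.card Z : ℝ) := Nat.cast_pos.mpr Fintype.card_pos
  have hFpos : (0:ℝ) < (F.card : ℝ) := Nat.cast_pos.mpr hF.card_pos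
  have e4 : ∀ x : X, (((σ4⁻¹ * ρ x * σ4⁻¹) ^ 2).trace).re = t x x := fun x => by
    rw [show σ4⁻¹ * ρ x * σ4⁻¹ = M x from rfl, sq]
  have pair : ∀ x y : X, (N x y : ℝ) * t x y ≤
      (F.card : ℝ) * (Fintype.card Z : ℝ)⁻¹ * t x y
        + (if x = y then (F.card : ℝ) * t x y else 0) := by
    intro x y
    by_cases hxy : x = y
    · subst hxy
      rw [if_pos rfl]
      have hNx : N x x = F.card := by
        rw [hN]; simp
      rw [hNx]
      have h0 : 0 ≤ (F.card : ℝ) * (Fintype.card Z : ℝ)⁻¹ * t x x :=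
        mul_nonneg (mul_nonneg hFpos.le (inv_nonneg.mpr hZpos.le)) (htnn x x)
      linarith
    · rw [if_neg hxy]
      have h := htu y x (Ne.symm hxy)
      have hcast : (Fintype.card Z : ℝ) * (N x y : ℝ) ≤ (F.card : ℝ) := by
        have := (Nat.cast_le (α := ℝ)).mpr h
        push_cast at this
        exact this
      have hNle : (N x y : ℝ) ≤ (F.card : ℝ) * (Fintype.card Z : ℝ)⁻¹ := by
        have h2 : (N x y : ℝ) ≤ (F.card : ℝ) / (Fintype.card Z : ℝ) :=
          (le_div_iff₀ hZpos).mpr (by linarith)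
        rwa [div_eq_mul_inv] at h2
      have := mul_le_mul_of_nonneg_right hNle (htnn x y)
      linarith
  have sum_pair : ∑ x : X, ∑ y : X, (N x y : ℝ) * t x y ≤
      (F.card : ℝ) * (Fintype.card Z : ℝ)⁻¹ * (∑ x : X, ∑ y : X, t x y)
        + (F.card : ℝ) * ∑ x : X, t x x := by
    calc ∑ x : X, ∑ y : X, (N x y : ℝ) * t x y
        ≤ ∑ x : X, ∑ y : X, ((F.card : ℝ) * (Fintype.card Z : ℝ)⁻¹ * t x y
            + (if x = y then (F.card : ℝ) * t x y else 0)) :=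
          Finset.sum_le_sum fun x _ => Finset.sum_le_sum fun y _ => pair x y
      _ = (F.card : ℝ) * (Fintype.card Z : ℝ)⁻¹ * (∑ x : X, ∑ y : X, t x y)
            + (F.card : ℝ) * ∑ x : X, t x x := by
          simp only [Finset.sum_add_distrib]
          congr 1
          · rw [Finset.mul_sum]
            exact Finset.sum_congr rfl fun x _ => (Finset.mul_sum _ _ _).symm
          · rw [Finset.mul_sum]
            refine Finset.sum_congr rfl fun x _ => ?_
            rw [Finset.sum_ite_eq, if_pos (Finset.mem_univ x)]
  simp only [e1, e4]
  rw [e2, Finset.sum_sub_distrib, e3, Finset.sum_const, nsmul_eq_mul]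
  rw [inv_mul_le_iff₀ hFpos]
  have hassoc : (F.card : ℝ) * (Fintype.card Z : ℝ)⁻¹ * (∑ x : X, ∑ y : X, t x y)
      = (F.card : ℝ) * ((Fintype.card Z : ℝ)⁻¹ * (∑ x : X, ∑ y : X, t x y)) := by ring
  linarith [sum_pair]
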